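/- Let Γ be a finite graph whose edge set is partitioned by a collection 𝒞 of cliques such that every vertex lies in exactly m cliques of 𝒞, and suppose |𝒞| < |V(Γ)|. Then −m is an eigenvalue of the adjacency matrix of Γ, and moreover −m is the smallest eigenvalue. -/

import Mathlib

open SimpleGraph Finset Matrix

/-- If the edges of a finite graph are partitioned by a collection `𝒞` of
cliques with every vertex in exactly `m` cliques of `𝒞`, and `|𝒞| < |V|`, then `−m` is an
eigenvalue of the adjacency matrix, and it is the smallest eigenvalue. -/
theorem neg_m_smallest_eigenvalue {V : Type*} [Fintype V] [DecidableEq V]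
    (G : SimpleGraph V) [DecidableRel G.Adj] (𝒞 : Set (Finset V)) (m : ℕ)
    (hclique : ∀ C ∈ 𝒞, G.IsClique (C : Set V))
    (hedge : ∀ x y : V, G.Adj x y → ∃! C, C ∈ 𝒞 ∧ x ∈ C ∧ y ∈ C)
    (hvert : ∀ x : V, {C ∈ 𝒞 | x ∈ C}.ncard = m)
    (hcard : 𝒞.ncard < Fintype.card V) :
    (∃ v : V → ℝ, v ≠ 0 ∧ G.adjMatrix ℝ *ᵥ v = (-(m : ℝ)) • v) ∧
    ∀ μ : ℝ, (∃ v : V → ℝ, v ≠ 0 ∧ G.adjMatrix ℝ *ᵥ v = μ • v) → -(m : ℝ) ≤ μ := by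
  classical
  haveI : Fintype ↥𝒞 := 𝒞.toFinite.fintype
  have hcard𝒞 : Fintype.card ↥𝒞 = 𝒞.ncard := by
    rw [← Nat.card_eq_fintype_card, Nat.card_coe_set_eq]
  set B : Matrix V ↥𝒞 ℝ := fun x C => if x ∈ (C : Finset V) then 1 else 0 with hB
  -- the key identity B * Bᵀ = A + m • 1
  have key : B * Bᵀ = G.adjMatrix ℝ + (m : ℝ) • 1 := by
    ext x y
    simp only [mul_apply, transpose_apply, adjMatrix_apply, Matrix.add_apply,
      Matrix.smul_apply, Matrix.one_apply, smul_eq_mul]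
    simp only [hB]
    have hterm : ∀ C : ↥𝒞,
        (if x ∈ (C : Finset V) then (1:ℝ) else 0) * (if y ∈ (C : Finset V) then 1 else 0)
          = if x ∈ (C : Finset V) ∧ y ∈ (C : Finset V) then 1 else 0 := by
      intro C; split_ifs with h1 h2 h3 <;> simp_all
    rw [Finset.sum_congr rfl fun C _ => hterm C, Finset.sum_boole]
    by_cases hxy : x = y
    · subst hxy
      have hcount : (univ.filter fun C : ↥𝒞 => x ∈ (C : Finset V)).card = m := by
        calc (univ.filter fun C : ↥𝒞 => x ∈ (C : Finset V)).card
            = Fintype.card {C : ↥𝒞 // x ∈ (C : Finset V)} :=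
              (Fintype.card_subtype _).symm
          _ = Nat.card {C : ↥𝒞 // x ∈ (C : Finset V)} := Nat.card_eq_fintype_card.symm
          _ = Nat.card {C : Finset V // C ∈ 𝒞 ∧ x ∈ C} :=
              Nat.card_congr (Equiv.subtypeSubtypeEquivSubtypeInter (· ∈ 𝒞) (x ∈ ·))
          _ = ({C ∈ 𝒞 | x ∈ C}).ncard := (Nat.card_coe_set_eq _).symm ▸ rfl
          _ = m := hvert x
      simp [hcount, G.irrefl]
    · by_cases hadj : G.Adj x y
      · obtain ⟨C₀, ⟨hC₀, hxC₀, hyC₀⟩, huniq⟩ := hedge x y hadj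
        have hfil : (univ.filter fun C : ↥𝒞 => x ∈ (C : Finset V) ∧ y ∈ (C : Finset V))
            = {⟨C₀, hC₀⟩} := by
          ext C
          simp only [Finset.mem_filter, Finset.mem_univ, true_and, Finset.mem_singleton]
          constructor
          · rintro ⟨h1, h2⟩
            exact Subtype.ext (huniq (C : Finset V) ⟨C.2, h1, h2⟩)
          · rintro rfl; exact ⟨hxC₀, hyC₀⟩
        simp [hfil, hadj, hxy]
      · have hfil : (univ.filter fun C : ↥𝒞 => x ∈ (C : Finset V) ∧ y ∈ (C : Finset V))
            = ∅ := by
          ext C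
          simp only [Finset.mem_filter, Finset.mem_univ, true_and, Finset.notMem_empty,
            iff_false, not_and]
          intro h1 h2
          exact hadj (hclique (C : Finset V) C.2 h1 h2 hxy)
        simp [hfil, hadj, hxy]
  constructor
  · -- existence of eigenvector with eigenvalue -m
    have hdet : (B * Bᵀ).det = 0 := by
      by_contra h
      have hunit : IsUnit (B * Bᵀ) := (isUnit_iff_isUnit_det _).mpr (isUnit_iff_ne_zero.mpr h)
      have hrank : (B * Bᵀ).rank = Fintype.card V := Matrix.rank_of_isUnit _ hunit
      have h1 : (B * Bᵀ).rank ≤ B.rank := Matrix.rank_mul_le_left B Bᵀ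
      have h2 : B.rank ≤ Fintype.card ↥𝒞 := Matrix.rank_le_card_width B
      omega
    obtain ⟨v, hv0, hv⟩ := Matrix.exists_mulVec_eq_zero_iff.mpr hdet
    refine ⟨v, hv0, ?_⟩
    have := hv
    rw [key, Matrix.add_mulVec, Matrix.smul_mulVec, Matrix.one_mulVec] at this
    have h3 : G.adjMatrix ℝ *ᵥ v = -( (m:ℝ) • v) := by linear_combination (norm := module) this
    rw [h3, ← neg_smul]
  · rintro μ ⟨v, hv0, hv⟩
    have hpsd : 0 ≤ v ⬝ᵥ ((B * Bᵀ) *ᵥ v) := by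
      rw [← Matrix.mulVec_mulVec, Matrix.dotProduct_mulVec, ← Matrix.mulVec_transpose]
      exact Finset.sum_nonneg fun i _ => mul_self_nonneg _
    rw [key, Matrix.add_mulVec, Matrix.smul_mulVec, Matrix.one_mulVec, hv,
      dotProduct_add, dotProduct_smul, dotProduct_smul, smul_eq_mul, smul_eq_mul] at hpsd
    have hvv : 0 < v ⬝ᵥ v := by
      rcases lt_or_eq_of_le (Finset.sum_nonneg fun i _ => mul_self_nonneg (v i) :
          0 ≤ v ⬝ᵥ v) with h | h
      · exact h
      · exact absurd (dotProduct_self_eq_zero.mp h.symm) hv0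
    nlinarith
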